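/- arXiv:2405.20645 — 3 statements merged into one kernel-verified Lean document; each statement's English description precedes it below -/
import Mathlib

section
/- Let I = (x_1,x_2,x_3)^2 ∩ (x_3,x_4,x_5)^2 ∩ (x_1,x_5,x_6)^2 in K[x_1,...,x_6]. Then I is not weakly polymatroidal with respect to any total order on the variables x_1,...,x_6. -/
open MvPolynomial

/-- Total degree of an exponent vector. -/
def expDeg {n : ℕ} (m : Fin n →₀ ℕ) : ℕ := m.sum fun _ e => e

/-- A monomial ideal: an ideal generated by a set of monomials. -/
def IsMonomialIdeal {n : ℕ} {K : Type*} [Field K]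
    (I : Ideal (MvPolynomial (Fin n) K)) : Prop :=
  ∃ A : Set (Fin n →₀ ℕ), I = Ideal.span ((fun m => (monomial m (1 : K))) '' A)

/-- `m` is (the exponent vector of) a minimal monomial generator of `I`. -/
def MinGen {n : ℕ} {K : Type*} [Field K]
    (I : Ideal (MvPolynomial (Fin n) K)) (m : Fin n →₀ ℕ) : Prop :=
  (monomial m (1 : K)) ∈ I ∧
    ∀ m' : Fin n →₀ ℕ, m' ≤ m → m' ≠ m → (monomial m' (1 : K)) ∉ I

/-- The non-pure dual exchange property. -/
def NPDE {n : ℕ} {K : Type*} [Field K]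
    (I : Ideal (MvPolynomial (Fin n) K)) : Prop :=
  ∀ u v : Fin n →₀ ℕ, MinGen I u → MinGen I v → expDeg u ≤ expDeg v →
    ∀ i : Fin n, v i < u i →
      ∃ j : Fin n, u j < v j ∧
        (monomial (v + Finsupp.single i 1 - Finsupp.single j 1) (1 : K)) ∈ I

/-- `I` has linear quotients. -/
def HasLinearQuotients {n : ℕ} {K : Type*} [Field K]
    (I : Ideal (MvPolynomial (Fin n) K)) : Prop :=
  ∃ l : List (Fin n →₀ ℕ), l.Nodup ∧ (∀ m, MinGen I m ↔ m ∈ l) ∧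
    ∀ k : Fin l.length, 0 < (k : ℕ) →
      ∃ V : Set (Fin n),
        Submodule.colon
          (Ideal.span ((fun m => (monomial m (1 : K))) '' {m | m ∈ l.take k}))
          (Ideal.span {monomial (l.get k) (1 : K)})
        = Ideal.span ((fun i => (X i : MvPolynomial (Fin n) K)) '' V)

/-- The monomial prime ideal generated by the variables with index in `J`. -/
noncomputable def mIdeal {n : ℕ} (K : Type*) [Field K] (J : Set (Fin n)) :
    Ideal (MvPolynomial (Fin n) K) :=
  Ideal.span ((fun i => (X i : MvPolynomial (Fin n) K)) '' J)

/-- `I` is weakly polymatroidal with respect to the variable order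
`x_{σ 0} > x_{σ 1} > ⋯`. -/
def WeaklyPolymatroidal {n : ℕ} {K : Type*} [Field K]
    (I : Ideal (MvPolynomial (Fin n) K)) (σ : Equiv.Perm (Fin n)) : Prop :=
  ∀ u v : Fin n →₀ ℕ, MinGen I u → MinGen I v →
    ∀ t : Fin n, (∀ k : Fin n, k < t → u (σ k) = v (σ k)) → v (σ t) < u (σ t) →
      ∃ j : Fin n, t < j ∧ 0 < v (σ j) ∧
        (monomial (v + Finsupp.single (σ t) 1 - Finsupp.single (σ j) 1) (1 : K)) ∈ I

/-- `I` has a `d`-linear (finite free graded) resolution. -/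
def HasLinearResolution {n : ℕ} {K : Type*} [Field K]
    (I : Ideal (MvPolynomial (Fin n) K)) (d : ℕ) : Prop :=
  ∃ (b : ℕ → ℕ) (g : Fin (b 0) → MvPolynomial (Fin n) K)
    (M : ∀ k : ℕ, Matrix (Fin (b k)) (Fin (b (k + 1))) (MvPolynomial (Fin n) K)),
    (∀ i, (g i).IsHomogeneous d) ∧
    Ideal.span (Set.range g) = I ∧
    (∀ k i j, ((M k) i j).IsHomogeneous 1) ∧
    LinearMap.ker (Fintype.linearCombination (MvPolynomial (Fin n) K) g)
      = LinearMap.range (M 0).mulVecLin ∧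
    ∀ k, LinearMap.ker (M k).mulVecLin = LinearMap.range (M (k + 1)).mulVecLin

/-- The ideal generated by the degree-`d` homogeneous elements of `I`. -/
noncomputable def componentIdeal {n : ℕ} {K : Type*} [Field K]
    (I : Ideal (MvPolynomial (Fin n) K)) (d : ℕ) :
    Ideal (MvPolynomial (Fin n) K) :=
  Ideal.span {f | f ∈ I ∧ f.IsHomogeneous d}

/-- `I` is componentwise linear. -/
def ComponentwiseLinear {n : ℕ} {K : Type*} [Field K]
    (I : Ideal (MvPolynomial (Fin n) K)) : Prop :=
  ∀ d : ℕ, HasLinearResolution (componentIdeal I d) d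

namespace Stmt14Aux

open MvPolynomial Finsupp

abbrev Cnd (m : Fin 6 → ℕ) : Prop :=
  2 ≤ m 0 + m 1 + m 2 ∧ 2 ≤ m 2 + m 3 + m 4 ∧ 2 ≤ m 0 + m 4 + m 5

lemma cnd_mono {p q : Fin 6 → ℕ} (h : ∀ k, p k ≤ q k) : Cnd p → Cnd q := by
  rintro ⟨h1, h2, h3⟩
  refine ⟨?_, ?_, ?_⟩ <;>
    · have := h 0; have := h 1; have := h 2; have := h 3; have := h 4; have := h 5; omega

variable {K : Type*} [Field K]

lemma X_eq (x : Fin 6) : (X x : MvPolynomial (Fin 6) K) = monomial (Finsupp.single x 1) 1 := by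
  rw [← X_pow_eq_monomial, pow_one]

lemma mIdeal_sq (a b c : Fin 6) :
    (mIdeal K {a, b, c}) ^ 2 =
      Ideal.span ((fun m => (monomial m (1 : K))) ''
        {s | ∃ x ∈ ({a, b, c} : Set (Fin 6)), ∃ y ∈ ({a, b, c} : Set (Fin 6)),
          s = Finsupp.single x 1 + Finsupp.single y 1}) := by
  rw [mIdeal, pow_two, Ideal.span_mul_span']
  congr 1
  ext p
  constructor
  · rintro ⟨_, ⟨x, hx, rfl⟩, _, ⟨y, hy, rfl⟩, rfl⟩
    exact ⟨_, ⟨x, hx, y, hy, rfl⟩, by simp [X_eq, monomial_mul]⟩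
  · rintro ⟨_, ⟨x, hx, y, hy, rfl⟩, rfl⟩
    exact ⟨X x, ⟨x, hx, rfl⟩, X y, ⟨y, hy, rfl⟩, by simp [X_eq, monomial_mul]⟩

lemma single_sum3 {a b c x : Fin 6} (hab : a ≠ b) (hac : a ≠ c) (hbc : b ≠ c)
    (hx : x ∈ ({a, b, c} : Set (Fin 6))) :
    (Finsupp.single x 1 : Fin 6 →₀ ℕ) a + Finsupp.single x 1 b + Finsupp.single x 1 c = 1 := by
  rcases hx with rfl | rfl | rfl <;>
    simp [Finsupp.single_apply, hab, hac, hbc, Ne.symm hab, Ne.symm hac, Ne.symm hbc]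

lemma pair_le_same {x : Fin 6} {m : Fin 6 →₀ ℕ} (h : 2 ≤ m x) :
    Finsupp.single x 1 + Finsupp.single x 1 ≤ m := by
  rw [Finsupp.le_def]
  intro k
  rw [Finsupp.add_apply]
  rcases eq_or_ne x k with rfl | hne
  · simpa using h
  · simp [Finsupp.single_eq_of_ne' hne]

lemma pair_le_ne {x y : Fin 6} {m : Fin 6 →₀ ℕ} (hxy : x ≠ y) (h1 : 1 ≤ m x) (h2 : 1 ≤ m y) :
    Finsupp.single x 1 + Finsupp.single y 1 ≤ m := by
  rw [Finsupp.le_def]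
  intro k
  rw [Finsupp.add_apply]
  rcases eq_or_ne x k with rfl | hx
  · simpa [Finsupp.single_eq_of_ne' (Ne.symm hxy)] using h1
  · rcases eq_or_ne y k with rfl | hy
    · simpa [Finsupp.single_eq_of_ne' hx] using h2
    · simp [Finsupp.single_eq_of_ne' hx, Finsupp.single_eq_of_ne' hy]

lemma mem_sq_iff {a b c : Fin 6} (hab : a ≠ b) (hac : a ≠ c) (hbc : b ≠ c) (m : Fin 6 →₀ ℕ) :
    (monomial m (1 : K)) ∈ (mIdeal K {a, b, c}) ^ 2 ↔ 2 ≤ m a + m b + m c := by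
  classical
  rw [mIdeal_sq, mem_ideal_span_monomial_image, support_monomial, if_neg one_ne_zero]
  simp only [Finset.mem_singleton, forall_eq, Set.mem_setOf_eq]
  constructor
  · rintro ⟨si, ⟨x, hx, y, hy, rfl⟩, hle⟩
    have ha := Finsupp.le_def.mp hle a
    have hb := Finsupp.le_def.mp hle b
    have hc := Finsupp.le_def.mp hle c
    rw [Finsupp.add_apply] at ha hb hc
    have hxs := single_sum3 hab hac hbc hx
    have hys := single_sum3 hab hac hbc hy
    omega
  · intro h
    have hma : a ∈ ({a, b, c} : Set (Fin 6)) := by simp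
    have hmb : b ∈ ({a, b, c} : Set (Fin 6)) := by simp
    have hmc : c ∈ ({a, b, c} : Set (Fin 6)) := by simp
    by_cases h2a : 2 ≤ m a
    · exact ⟨_, ⟨a, hma, a, hma, rfl⟩, pair_le_same h2a⟩
    by_cases h2b : 2 ≤ m b
    · exact ⟨_, ⟨b, hmb, b, hmb, rfl⟩, pair_le_same h2b⟩
    by_cases h2c : 2 ≤ m c
    · exact ⟨_, ⟨c, hmc, c, hmc, rfl⟩, pair_le_same h2c⟩
    have : (1 ≤ m a ∧ 1 ≤ m b) ∨ (1 ≤ m a ∧ 1 ≤ m c) ∨ (1 ≤ m b ∧ 1 ≤ m c) := by omega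
    rcases this with ⟨h1, h2⟩ | ⟨h1, h2⟩ | ⟨h1, h2⟩
    · exact ⟨_, ⟨a, hma, b, hmb, rfl⟩, pair_le_ne hab h1 h2⟩
    · exact ⟨_, ⟨a, hma, c, hmc, rfl⟩, pair_le_ne hac h1 h2⟩
    · exact ⟨_, ⟨b, hmb, c, hmc, rfl⟩, pair_le_ne hbc h1 h2⟩

noncomputable def Iid (K : Type*) [Field K] : Ideal (MvPolynomial (Fin 6) K) :=
  (mIdeal K {0, 1, 2}) ^ 2 ⊓ (mIdeal K {2, 3, 4}) ^ 2 ⊓ (mIdeal K {0, 4, 5}) ^ 2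

lemma memI_iff (m : Fin 6 →₀ ℕ) :
    (monomial m (1 : K)) ∈ Iid K ↔ Cnd (fun k => m k) := by
  rw [Iid, Ideal.mem_inf, Ideal.mem_inf,
    mem_sq_iff (by decide) (by decide) (by decide) m,
    mem_sq_iff (by decide) (by decide) (by decide) m,
    mem_sq_iff (by decide) (by decide) (by decide) m]
  exact ⟨fun ⟨⟨h1, h2⟩, h3⟩ => ⟨h1, h2, h3⟩, fun ⟨h1, h2, h3⟩ => ⟨⟨h1, h2⟩, h3⟩⟩

lemma minGen_of (g : Fin 6 → ℕ) (hg : Cnd g)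
    (hmin : ∀ i : Fin 6, 0 < g i → ¬ Cnd (fun k => g k - if i = k then 1 else 0)) :
    MinGen (Iid K) (Finsupp.equivFunOnFinite.symm g) := by
  constructor
  · rw [memI_iff]; exact hg
  · intro m' hle hne hmem
    rw [memI_iff] at hmem
    have hlt : ∃ i, m' i < g i := by
      by_contra hc
      push_neg at hc
      exact hne (Finsupp.ext fun k => le_antisymm (Finsupp.le_def.mp hle k) (hc k))
    obtain ⟨i, hi⟩ := hlt
    refine hmin i (by omega) (cnd_mono (fun k => ?_) hmem)
    have hk : m' k ≤ g k := Finsupp.le_def.mp hle k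
    show m' k ≤ g k - if i = k then 1 else 0
    rcases eq_or_ne i k with rfl | h
    · rw [if_pos rfl]; omega
    · rw [if_neg h]; omega

def U1 : Fin 6 → ℕ := ![0, 1, 1, 1, 0, 2]
def V1 : Fin 6 → ℕ := ![0, 0, 2, 0, 0, 2]
def U2 : Fin 6 → ℕ := ![1, 0, 2, 0, 0, 1]
def V2 : Fin 6 → ℕ := ![1, 0, 1, 0, 1, 0]
def U3 : Fin 6 → ℕ := ![1, 1, 0, 0, 2, 0]

def Pairs : List ((Fin 6 → ℕ) × (Fin 6 → ℕ)) := [(U1, V1), (U2, V2), (U3, V2)]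

abbrev BadP (σ : Equiv.Perm (Fin 6)) : Prop :=
  ∃ p ∈ Pairs, ∃ t : Fin 6,
    (∀ k : Fin 6, k < t → p.1 (σ k) = p.2 (σ k)) ∧ p.2 (σ t) < p.1 (σ t) ∧
    ∀ j : Fin 6, t < j → 0 < p.2 (σ j) →
      ¬ Cnd (fun k => p.2 k + (if σ t = k then 1 else 0) - (if σ j = k then 1 else 0))

set_option maxRecDepth 100000 in
set_option maxHeartbeats 4000000 in
theorem allBad : ∀ σ : Equiv.Perm (Fin 6), BadP σ := by decide

lemma minGen_pairs {p : (Fin 6 → ℕ) × (Fin 6 → ℕ)} (hp : p ∈ Pairs) :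
    MinGen (Iid K) (Finsupp.equivFunOnFinite.symm p.1) ∧
    MinGen (Iid K) (Finsupp.equivFunOnFinite.symm p.2) := by
  have h1 : MinGen (Iid K) (Finsupp.equivFunOnFinite.symm U1) :=
    minGen_of U1 (by decide) (by decide)
  have h2 : MinGen (Iid K) (Finsupp.equivFunOnFinite.symm V1) :=
    minGen_of V1 (by decide) (by decide)
  have h3 : MinGen (Iid K) (Finsupp.equivFunOnFinite.symm U2) :=
    minGen_of U2 (by decide) (by decide)
  have h4 : MinGen (Iid K) (Finsupp.equivFunOnFinite.symm V2) :=
    minGen_of V2 (by decide) (by decide)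
  have h5 : MinGen (Iid K) (Finsupp.equivFunOnFinite.symm U3) :=
    minGen_of U3 (by decide) (by decide)
  simp only [Pairs, List.mem_cons, List.not_mem_nil, or_false] at hp
  rcases hp with rfl | rfl | rfl
  · exact ⟨h1, h2⟩
  · exact ⟨h3, h4⟩
  · exact ⟨h5, h4⟩

end Stmt14Aux

theorem stmt14 (K : Type*) [Field K] :
    ∀ σ : Equiv.Perm (Fin 6),
      ¬ WeaklyPolymatroidal
        ((mIdeal K {0, 1, 2}) ^ 2 ⊓ (mIdeal K {2, 3, 4}) ^ 2 ⊓ (mIdeal K {0, 4, 5}) ^ 2) σ := by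
  intro σ hWP
  obtain ⟨p, hpmem, t, hpre, hlt, hall⟩ := Stmt14Aux.allBad σ
  obtain ⟨hu, hv⟩ := Stmt14Aux.minGen_pairs (K := K) hpmem
  obtain ⟨j, htj, hpos, hmem⟩ :=
    hWP (Finsupp.equivFunOnFinite.symm p.1) (Finsupp.equivFunOnFinite.symm p.2) hu hv t
      (fun k hk => hpre k hk) hlt
  have hmem' := (Stmt14Aux.memI_iff (K := K) _).mp hmem
  refine hall j htj hpos (Stmt14Aux.cnd_mono (fun k => le_of_eq ?_) hmem')
  rw [Finsupp.tsub_apply, Finsupp.add_apply, Finsupp.single_apply, Finsupp.single_apply]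
  rfl
end

section
/- Let I be a monomial ideal with the non-pure dual exchange property in S = K[x_1,...,x_n], let d be the minimal degree of a minimal generator of I, and suppose x_1 divides some minimal generator of I of degree d. Write I = x_1 I_1 + I_2 where G(I_2) consists of the minimal generators of I not divisible by x_1. Then I_2 ⊆ I_1, and both x_1 I_1 and I_2 satisfy the non-pure dual exchange property. -/
open MvPolynomial Pointwise

private lemma expDeg_eq_sum {n : ℕ} (m : Fin n →₀ ℕ) : expDeg m = ∑ i, m i := by
  rw [expDeg, Finsupp.sum_fintype]
  intro; rfl

private lemma expDeg_lt {n : ℕ} {a b : Fin n →₀ ℕ} (h : a ≤ b) (hne : a ≠ b) :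
    expDeg a < expDeg b := by
  rw [expDeg_eq_sum, expDeg_eq_sum]
  have hle := Finsupp.le_def.mp h
  obtain ⟨i, hi⟩ : ∃ i, a i ≠ b i := by
    by_contra hc; push_neg at hc; exact hne (Finsupp.ext hc)
  exact Finset.sum_lt_sum (fun i _ => hle i)
    ⟨i, Finset.mem_univ i, lt_of_le_of_ne (hle i) hi⟩

private lemma memMono {n : ℕ} {K : Type*} [Field K] {A : Set (Fin n →₀ ℕ)} {m : Fin n →₀ ℕ} :
    (monomial m (1 : K)) ∈ Ideal.span ((fun m => (monomial m (1 : K))) '' A) ↔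
      ∃ a ∈ A, a ≤ m := by
  rw [mem_ideal_span_monomial_image]
  simp [support_monomial]

private lemma exists_minGen_aux {n : ℕ} {K : Type*} [Field K]
    {I : Ideal (MvPolynomial (Fin n) K)} :
    ∀ N : ℕ, ∀ m : Fin n →₀ ℕ, expDeg m ≤ N → (monomial m (1 : K)) ∈ I →
      ∃ w, MinGen I w ∧ w ≤ m := by
  intro N
  induction N with
  | zero =>
    intro m hN hm
    by_cases hmg : MinGen I m
    · exact ⟨m, hmg, le_refl m⟩
    · simp only [MinGen, not_and, not_forall, not_not] at hmg
      obtain ⟨m', hle, hne, hm'⟩ := hmg hm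
      exact absurd (expDeg_lt hle hne) (by omega)
  | succ N ih =>
    intro m hN hm
    by_cases hmg : MinGen I m
    · exact ⟨m, hmg, le_refl m⟩
    · simp only [MinGen, not_and, not_forall, not_not] at hmg
      obtain ⟨m', hle, hne, hm'⟩ := hmg hm
      have := expDeg_lt hle hne
      obtain ⟨w, hw, hwle⟩ := ih m' (by omega) hm'
      exact ⟨w, hw, le_trans hwle hle⟩

private lemma exists_minGen {n : ℕ} {K : Type*} [Field K]
    {I : Ideal (MvPolynomial (Fin n) K)} {m : Fin n →₀ ℕ}
    (hm : (monomial m (1 : K)) ∈ I) : ∃ w, MinGen I w ∧ w ≤ m :=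
  exists_minGen_aux (expDeg m) m (le_refl _) hm

theorem stmt15 (K : Type*) [Field K] {n : ℕ} [NeZero n]
    (I : Ideal (MvPolynomial (Fin n) K)) (hmon : IsMonomialIdeal I) (h : NPDE I)
    (d : ℕ) (hmin : ∀ m, MinGen I m → d ≤ expDeg m)
    (hx1 : ∃ m, MinGen I m ∧ expDeg m = d ∧ 0 < m 0) :
    let I1 : Ideal (MvPolynomial (Fin n) K) :=
      Ideal.span ((fun m : Fin n →₀ ℕ => monomial m (1 : K)) ''
        {m | ∃ u, MinGen I u ∧ 0 < u 0 ∧ m = u - Finsupp.single 0 1})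
    let I2 : Ideal (MvPolynomial (Fin n) K) :=
      Ideal.span ((fun m : Fin n →₀ ℕ => monomial m (1 : K)) '' {m | MinGen I m ∧ m 0 = 0})
    I2 ≤ I1 ∧ NPDE (Ideal.span {(X 0 : MvPolynomial (Fin n) K)} * I1) ∧ NPDE I2 := by
  intro I1 I2
  set e0 : Fin n →₀ ℕ := Finsupp.single 0 1 with he0
  -- membership in I1
  have hA1mem : ∀ m : Fin n →₀ ℕ, (monomial m (1 : K)) ∈ I1 ↔
      ∃ u, MinGen I u ∧ 0 < u 0 ∧ u - e0 ≤ m := by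
    intro m
    rw [show I1 = Ideal.span ((fun m : Fin n →₀ ℕ => monomial m (1 : K)) ''
        {m | ∃ u, MinGen I u ∧ 0 < u 0 ∧ m = u - Finsupp.single 0 1}) from rfl, memMono]
    constructor
    · rintro ⟨a, ⟨u, hu, hu0, rfl⟩, hle⟩; exact ⟨u, hu, hu0, hle⟩
    · rintro ⟨u, hu, hu0, hle⟩; exact ⟨u - e0, ⟨u, hu, hu0, rfl⟩, hle⟩
  -- membership in I2
  have hA2mem : ∀ m : Fin n →₀ ℕ, (monomial m (1 : K)) ∈ I2 ↔
      ∃ a, MinGen I a ∧ a 0 = 0 ∧ a ≤ m := by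
    intro m
    rw [show I2 = Ideal.span ((fun m : Fin n →₀ ℕ => monomial m (1 : K)) ''
        {m | MinGen I m ∧ m 0 = 0}) from rfl, memMono]
    constructor
    · rintro ⟨a, ⟨ha, ha0⟩, hle⟩; exact ⟨a, ha, ha0, hle⟩
    · rintro ⟨a, ha, ha0, hle⟩; exact ⟨a, ⟨ha, ha0⟩, hle⟩
  have hadd : ∀ u : Fin n →₀ ℕ, 0 < u 0 → e0 + (u - e0) = u := by
    intro u hu
    rw [add_comm]
    exact tsub_add_cancel_of_le (Finsupp.single_le_iff.mpr hu)
  -- key: mingens with first coord 0 are divisible by some u/x1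
  have key : ∀ w : Fin n →₀ ℕ, MinGen I w → w 0 = 0 →
      ∃ u, MinGen I u ∧ 0 < u 0 ∧ u - e0 ≤ w := by
    intro w hw hw0
    obtain ⟨u, hu, hud, hu0⟩ := hx1
    have hdeg : expDeg u ≤ expDeg w := hud ▸ hmin w hw
    obtain ⟨j, hj, hmem⟩ := h u w hu hw hdeg 0 (by omega)
    have hj0 : j ≠ 0 := by
      intro hje; rw [hje] at hj; omega
    obtain ⟨z, hz, hzle⟩ := exists_minGen hmem
    have hzc : ∀ k, z k ≤ w k + (Finsupp.single (0 : Fin n) 1) k -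
        (Finsupp.single j 1) k := by
      intro k
      have := Finsupp.le_def.mp hzle k
      simpa [Finsupp.tsub_apply, Finsupp.add_apply] using this
    have hzc' : ∀ k, z k ≤ w k + (if (0 : Fin n) = k then 1 else 0) -
        (if j = k then 1 else 0) := by
      intro k
      have := hzc k
      rwa [Finsupp.single_apply, Finsupp.single_apply] at this
    by_cases hz0 : z 0 = 0
    · exfalso
      have hzlew : z ≤ w := by
        rw [Finsupp.le_def]
        intro k
        have hk := hzc' k
        by_cases hk0 : k = 0
        · subst hk0; omega
        · rw [if_neg (fun hc => hk0 hc.symm)] at hk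
          by_cases hkj : j = k
          · omega
          · rw [if_neg hkj] at hk; omega
      have hzne : z ≠ w := by
        intro hze; subst hze
        have hk := hzc' j
        rw [if_pos rfl, if_neg (fun hc => hj0 hc.symm)] at hk
        omega
      exact hw.2 z hzlew hzne hz.1
    · refine ⟨z, hz, Nat.pos_of_ne_zero hz0, ?_⟩
      rw [Finsupp.le_def]
      intro k
      rw [he0, Finsupp.tsub_apply, Finsupp.single_apply]
      by_cases hk0 : (0 : Fin n) = k
      · subst hk0
        have hk := hzc' 0
        rw [if_pos rfl, if_neg hj0] at hk
        rw [if_pos rfl]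
        omega
      · have hk := hzc' k
        rw [if_neg hk0] at hk ⊢
        by_cases hkj : j = k
        · rw [if_pos hkj] at hk; omega
        · rw [if_neg hkj] at hk; omega
  -- I2 ≤ I1
  have hle21 : I2 ≤ I1 := by
    apply Ideal.span_le.mpr
    rintro f ⟨v, ⟨hv, hv0⟩, rfl⟩
    exact (hA1mem v).mpr (key v hv hv0)
  refine ⟨hle21, ?_, ?_⟩
  · -- NPDE (span {X 0} * I1)
    have hJ1mem : ∀ m : Fin n →₀ ℕ,
        (monomial m (1 : K)) ∈ Ideal.span {(X 0 : MvPolynomial (Fin n) K)} * I1 ↔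
          ∃ u, MinGen I u ∧ 0 < u 0 ∧ u ≤ m := by
      intro m
      have hset : ({(X 0 : MvPolynomial (Fin n) K)} : Set (MvPolynomial (Fin n) K)) *
          ((fun m : Fin n →₀ ℕ => monomial m (1 : K)) ''
            {m | ∃ u, MinGen I u ∧ 0 < u 0 ∧ m = u - Finsupp.single 0 1})
          = (fun m : Fin n →₀ ℕ => monomial m (1 : K)) ''
            ((fun a => e0 + a) '' {m | ∃ u, MinGen I u ∧ 0 < u 0 ∧ m = u - Finsupp.single 0 1}) := by
        rw [Set.singleton_mul, Set.image_image, Set.image_image]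
        apply Set.image_congr
        intro a _
        rw [X, monomial_mul, one_mul, he0]
      rw [show Ideal.span {(X 0 : MvPolynomial (Fin n) K)} * I1 =
          Ideal.span (({(X 0 : MvPolynomial (Fin n) K)} : Set (MvPolynomial (Fin n) K)) *
            ((fun m : Fin n →₀ ℕ => monomial m (1 : K)) ''
              {m | ∃ u, MinGen I u ∧ 0 < u 0 ∧ m = u - Finsupp.single 0 1}))
        by exact (Ideal.span_mul_span' ({(X 0 : MvPolynomial (Fin n) K)} :
            Set (MvPolynomial (Fin n) K)) ((fun m : Fin n →₀ ℕ => monomial m (1 : K)) ''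
              {m | ∃ u, MinGen I u ∧ 0 < u 0 ∧ m = u - Finsupp.single 0 1})),
        hset, memMono]
      constructor
      · rintro ⟨b, ⟨a, ⟨u, hu, hu0, rfl⟩, rfl⟩, hle⟩
        refine ⟨u, hu, hu0, ?_⟩
        calc u = e0 + (u - e0) := (hadd u hu0).symm
        _ ≤ m := hle
      · rintro ⟨u, hu, hu0, hle⟩
        exact ⟨u, ⟨u - e0, ⟨u, hu, hu0, rfl⟩, hadd u hu0⟩, hle⟩
    have hJ1min : ∀ m : Fin n →₀ ℕ,
        MinGen (Ideal.span {(X 0 : MvPolynomial (Fin n) K)} * I1) m → MinGen I m ∧ 0 < m 0 := by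
      intro m hm
      obtain ⟨u, hu, hu0, hule⟩ := (hJ1mem m).mp hm.1
      have hum : u = m := by
        by_contra hne
        exact hm.2 u hule hne ((hJ1mem u).mpr ⟨u, hu, hu0, le_refl u⟩)
      subst hum
      exact ⟨hu, hu0⟩
    intro u v hu hv hdeg i hi
    obtain ⟨hu', hu0⟩ := hJ1min u hu
    obtain ⟨hv', hv0⟩ := hJ1min v hv
    obtain ⟨j, hj, hmem⟩ := h u v hu' hv' hdeg i hi
    refine ⟨j, hj, ?_⟩
    obtain ⟨w, hw, hwle⟩ := exists_minGen hmem
    have htc : ∀ k : Fin n, ((v + Finsupp.single i 1 - Finsupp.single j 1 : Fin n →₀ ℕ)) k =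
        v k + (if i = k then 1 else 0) - (if j = k then 1 else 0) := by
      intro k
      rw [Finsupp.tsub_apply, Finsupp.add_apply, Finsupp.single_apply, Finsupp.single_apply]
    have hwc : ∀ k, w k ≤ v k + (if i = k then 1 else 0) - (if j = k then 1 else 0) := by
      intro k
      have := Finsupp.le_def.mp hwle k
      rwa [htc k] at this
    have ht0 : 1 ≤ v 0 + (if i = (0 : Fin n) then 1 else 0) - (if j = (0 : Fin n) then 1 else 0) := by
      by_cases hj0 : j = 0
      · subst hj0
        rw [if_pos rfl]
        have : u 0 < v 0 := hj
        omega
      · rw [if_neg hj0]; omega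
    by_cases hw0 : w 0 = 0
    · obtain ⟨u', hu'', hu''0, hu''le⟩ := key w hw hw0
      refine (hJ1mem _).mpr ⟨u', hu'', hu''0, ?_⟩
      rw [Finsupp.le_def]
      intro k
      have h1 := Finsupp.le_def.mp hu''le k
      rw [he0, Finsupp.tsub_apply, Finsupp.single_apply] at h1
      rw [htc k]
      have h2 := hwc k
      by_cases hk0 : (0 : Fin n) = k
      · subst hk0
        rw [if_pos rfl] at h1
        omega
      · rw [if_neg hk0] at h1
        omega
    · exact (hJ1mem _).mpr ⟨w, hw, Nat.pos_of_ne_zero hw0, hwle⟩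
  · -- NPDE I2
    have hI2min : ∀ m : Fin n →₀ ℕ, MinGen I2 m → MinGen I m ∧ m 0 = 0 := by
      intro m hm
      obtain ⟨a, ha, ha0, hale⟩ := (hA2mem m).mp hm.1
      have ham : a = m := by
        by_contra hne
        exact hm.2 a hale hne ((hA2mem a).mpr ⟨a, ha, ha0, le_refl a⟩)
      subst ham
      exact ⟨ha, ha0⟩
    intro u v hu hv hdeg i hi
    obtain ⟨hu', hu0⟩ := hI2min u hu
    obtain ⟨hv', hv0⟩ := hI2min v hv
    obtain ⟨j, hj, hmem⟩ := h u v hu' hv' hdeg i hi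
    refine ⟨j, hj, ?_⟩
    obtain ⟨w, hw, hwle⟩ := exists_minGen hmem
    have hi0 : i ≠ 0 := by intro hie; rw [hie] at hi; omega
    have hj0 : j ≠ 0 := by intro hje; rw [hje] at hj; omega
    have hw0 : w 0 = 0 := by
      have := Finsupp.le_def.mp hwle 0
      rw [Finsupp.tsub_apply, Finsupp.add_apply, Finsupp.single_apply,
        Finsupp.single_apply, if_neg hi0, if_neg hj0] at this
      omega
    exact (hA2mem _).mpr ⟨w, hw, hw0, hwle⟩
end

section
/- Let J_1, J_2, J_3 ⊆ [n] with J_1 ∩ J_3 = ∅, J_1 ∩ J_2 ≠ ∅, J_2 ∩ J_3 ≠ ∅, and let a_1 ≥ a_2 ≥ a_3 be positive integers. Set B_1 = J_1 ∩ J_2, B_2 = J_2 ∩ J_3, C_1 = J_1\J_2, C_2 = J_2\(J_1 ∪ J_3), C_3 = J_3\J_2. A monomial w with support in J_1 ∪ J_2 ∪ J_3, decomposed as w = w'_1 w'_2 w''_1 w''_2 w''_3 with supp(w'_t) ⊆ B_t and supp(w''_t) ⊆ C_t, is a minimal generator of I = m_{J_1}^{a_1} ∩ m_{J_2}^{a_2}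 ∩ m_{J_3}^{a_3} only if deg(w'_1) + deg(w''_1) = a_1 (with the other membership inequalities a_2 ≤ deg(w'_1)+deg(w'_2)+deg(w''_2) and a_3 ≤ deg(w'_2)+deg(w''_3) holding). -/
open MvPolynomial

namespace Stmt16Aux

variable {n : ℕ} {K : Type*} [Field K]

def degJ (J : Finset (Fin n)) (m : Fin n →₀ ℕ) : ℕ := ∑ i ∈ J, m i

lemma degJ_add (J : Finset (Fin n)) (m m' : Fin n →₀ ℕ) :
    degJ J (m + m') = degJ J m + degJ J m' := by
  simp [degJ, Finsupp.add_apply, Finset.sum_add_distrib]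

def Tideal (J : Finset (Fin n)) (a : ℕ) : Ideal (MvPolynomial (Fin n) K) where
  carrier := {f | ∀ m ∈ f.support, a ≤ degJ J m}
  zero_mem' := by simp
  add_mem' := by
    intro p q hp hq m hm
    classical
    rcases Finset.mem_union.mp (MvPolynomial.support_add hm) with h | h
    · exact hp m h
    · exact hq m h
  smul_mem' := by
    intro c f hf m hm
    classical
    rw [smul_eq_mul] at hm
    have := MvPolynomial.support_mul c f hm
    rcases Finset.mem_add.mp this with ⟨m1, hm1, m2, hm2, rfl⟩
    have := hf m2 hm2
    have := degJ_add J m1 m2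
    omega

lemma pow_le_T (J : Finset (Fin n)) (a : ℕ) :
    (mIdeal K (↑J : Set (Fin n))) ^ a ≤ Tideal J a := by
  induction a with
  | zero => intro f _ m _; exact Nat.zero_le _
  | succ a ih =>
    rw [pow_succ]
    refine Ideal.mul_le.mpr (fun r hr s hs => ?_)
    have hr' : r ∈ (Tideal J a : Ideal (MvPolynomial (Fin n) K)) := ih hr
    have hs' : s ∈ (Tideal J 1 : Ideal (MvPolynomial (Fin n) K)) := by
      have : mIdeal K (↑J : Set (Fin n)) ≤ Tideal J 1 := by
        rw [mIdeal, Ideal.span_le]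
        rintro _ ⟨i, hi, rfl⟩
        intro m hm
        classical
        rw [MvPolynomial.support_X, Finset.mem_singleton] at hm
        subst hm
        have : (1:ℕ) ≤ ∑ j ∈ J, Finsupp.single i 1 j := by
          rw [Finset.sum_eq_single i]
          · simp
          · intro b _ hb; simp [Finsupp.single_apply, hb.symm]
          · intro h; exact absurd (Finset.mem_coe.mp hi) h
        simpa [degJ] using this
      exact this hs
    intro m hm
    classical
    rcases Finset.mem_add.mp (MvPolynomial.support_mul r s hm) with ⟨m1, hm1, m2, hm2, rfl⟩
    have h1 := hr' m1 hm1
    have h2 := hs' m2 hm2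
    have := degJ_add J m1 m2
    omega

lemma deg_of_mem_pow (J : Finset (Fin n)) (a : ℕ) (w : Fin n →₀ ℕ)
    (h : monomial w (1:K) ∈ (mIdeal K (↑J : Set (Fin n))) ^ a) : a ≤ degJ J w := by
  classical
  refine pow_le_T J a h w ?_
  rw [MvPolynomial.support_monomial, if_neg (one_ne_zero)]
  exact Finset.mem_singleton_self w

lemma degJ_single (J : Finset (Fin n)) {i : Fin n} (hiJ : i ∈ J) :
    degJ J (Finsupp.single i 1) = 1 := by
  rw [degJ, Finset.sum_eq_single i]
  · simp
  · intro b _ hb; simp [Finsupp.single_apply, hb.symm]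
  · intro h; exact absurd hiJ h

lemma sub_add_single (w : Fin n →₀ ℕ) {i : Fin n} (hwi : 0 < w i) :
    (w - Finsupp.single i 1) + Finsupp.single i 1 = w := by
  ext j
  simp only [Finsupp.add_apply, Finsupp.tsub_apply, Finsupp.single_apply]
  rcases eq_or_ne i j with rfl | hij
  · simp; omega
  · simp [hij]

lemma degJ_tsub_of_mem (J : Finset (Fin n)) (w : Fin n →₀ ℕ) {i : Fin n}
    (hiJ : i ∈ J) (hwi : 0 < w i) :
    degJ J (w - Finsupp.single i 1) + 1 = degJ J w := by
  conv_rhs => rw [← sub_add_single w hwi]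
  rw [degJ_add, degJ_single J hiJ]

lemma degJ_tsub_of_not_mem (J : Finset (Fin n)) (w : Fin n →₀ ℕ) {i : Fin n}
    (hiJ : i ∉ J) :
    degJ J (w - Finsupp.single i 1) = degJ J w := by
  refine Finset.sum_congr rfl (fun j hj => ?_)
  have hij : i ≠ j := fun h => hiJ (h ▸ hj)
  rw [Finsupp.tsub_apply, Finsupp.single_apply, if_neg hij, Nat.sub_zero]

lemma mem_pow_of_deg (J : Finset (Fin n)) (a : ℕ) (w : Fin n →₀ ℕ)
    (h : a ≤ degJ J w) :
    monomial w (1 : K) ∈ (mIdeal K (↑J : Set (Fin n))) ^ a := by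
  induction a generalizing w with
  | zero => simp
  | succ a ih =>
    have hpos : 0 < degJ J w := lt_of_lt_of_le (Nat.succ_pos a) h
    obtain ⟨i, hiJ, hwi⟩ : ∃ i ∈ J, 0 < w i := by
      by_contra hc
      push_neg at hc
      have : degJ J w = 0 := Finset.sum_eq_zero (fun i hi => Nat.le_zero.mp (hc i hi))
      omega
    have hdeg : a ≤ degJ J (w - Finsupp.single i 1) := by
      have := degJ_tsub_of_mem J w hiJ hwi
      omega
    have hmem := ih _ hdeg
    have : monomial w (1:K) = monomial (w - Finsupp.single i 1) (1:K) * X i := by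
      rw [X, monomial_mul, mul_one, sub_add_single w hwi]
    rw [this, pow_succ]
    exact Ideal.mul_mem_mul hmem (Ideal.subset_span ⟨i, hiJ, rfl⟩)

end Stmt16Aux

theorem stmt16 (K : Type*) [Field K] {n : ℕ} (J1 J2 J3 : Finset (Fin n))
    (h13 : J1 ∩ J3 = ∅) (h12 : (J1 ∩ J2).Nonempty) (h23 : (J2 ∩ J3).Nonempty)
    (a1 a2 a3 : ℕ) (h3 : 0 < a3) (h32 : a3 ≤ a2) (h21 : a2 ≤ a1)
    (w : Fin n →₀ ℕ)
    (hw : MinGen ((mIdeal K ↑J1) ^ a1 ⊓ (mIdeal K ↑J2) ^ a2 ⊓ (mIdeal K ↑J3) ^ a3) w)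
    (hsupp : (↑w.support : Set (Fin n)) ⊆ ↑J1 ∪ ↑J2 ∪ ↑J3) :
    ((∑ i ∈ J1 ∩ J2, w i) + ∑ i ∈ J1 \ J2, w i) = a1 ∧
    a2 ≤ (∑ i ∈ J1 ∩ J2, w i) + (∑ i ∈ J2 ∩ J3, w i) + ∑ i ∈ J2 \ (J1 ∪ J3), w i ∧
    a3 ≤ (∑ i ∈ J2 ∩ J3, w i) + ∑ i ∈ J3 \ J2, w i := by
  classical
  open Stmt16Aux in
  obtain ⟨hmem, hmin⟩ := hw
  have hm1 : monomial w (1:K) ∈ (mIdeal K (↑J1 : Set (Fin n))) ^ a1 :=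
    (Submodule.mem_inf.mp (Submodule.mem_inf.mp hmem).1).1
  have hm2 : monomial w (1:K) ∈ (mIdeal K (↑J2 : Set (Fin n))) ^ a2 :=
    (Submodule.mem_inf.mp (Submodule.mem_inf.mp hmem).1).2
  have hm3 : monomial w (1:K) ∈ (mIdeal K (↑J3 : Set (Fin n))) ^ a3 :=
    (Submodule.mem_inf.mp hmem).2
  have d1 : a1 ≤ degJ J1 w := deg_of_mem_pow J1 a1 w hm1
  have d2 : a2 ≤ degJ J2 w := deg_of_mem_pow J2 a2 w hm2
  have d3 : a3 ≤ degJ J3 w := deg_of_mem_pow J3 a3 w hm3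
  -- sum decompositions
  have s1 : (∑ i ∈ J1 ∩ J2, w i) + ∑ i ∈ J1 \ J2, w i = degJ J1 w := by
    rw [degJ, ← Finset.sum_union (Finset.disjoint_left.mpr
      (fun i hi hi' => (Finset.mem_sdiff.mp hi').2 (Finset.mem_inter.mp hi).2))]
    congr 1
    ext i
    simp only [Finset.mem_union, Finset.mem_inter, Finset.mem_sdiff]
    tauto
  have h13' : ∀ i : Fin n, i ∈ J1 → i ∈ J3 → False := by
    intro i hi1 hi3
    have : i ∈ J1 ∩ J3 := Finset.mem_inter.mpr ⟨hi1, hi3⟩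
    rw [h13] at this
    exact absurd this (Finset.notMem_empty i)
  have s2 : (∑ i ∈ J1 ∩ J2, w i) + (∑ i ∈ J2 ∩ J3, w i) + ∑ i ∈ J2 \ (J1 ∪ J3), w i
      = degJ J2 w := by
    rw [degJ, ← Finset.sum_union, ← Finset.sum_union]
    · congr 1
      ext i
      simp only [Finset.mem_union, Finset.mem_inter, Finset.mem_sdiff]
      by_cases hi1 : i ∈ J1
      · have := h13' i hi1; tauto
      · tauto
    · rw [Finset.disjoint_left]
      intro i hi hi'
      simp only [Finset.mem_union, Finset.mem_inter, Finset.mem_sdiff] at hi hi'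
      tauto
    · rw [Finset.disjoint_left]
      intro i hi hi'
      simp only [Finset.mem_inter] at hi hi'
      exact h13' i hi.1 hi'.2
  have s3 : (∑ i ∈ J2 ∩ J3, w i) + ∑ i ∈ J3 \ J2, w i = degJ J3 w := by
    rw [degJ, ← Finset.sum_union (Finset.disjoint_left.mpr
      (fun i hi hi' => (Finset.mem_sdiff.mp hi').2 (Finset.mem_inter.mp hi).1))]
    congr 1
    ext i
    simp only [Finset.mem_union, Finset.mem_inter, Finset.mem_sdiff]
    tauto
  refine ⟨?_, by omega, by omega⟩
  rw [s1]
  by_contra hne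
  have hlt : a1 < degJ J1 w := lt_of_le_of_ne d1 (Ne.symm hne)
  -- helper to derive a contradiction from a suitable variable i
  have key : ∀ i : Fin n, 0 < w i →
      a1 ≤ degJ J1 (w - Finsupp.single i 1) →
      a2 ≤ degJ J2 (w - Finsupp.single i 1) →
      a3 ≤ degJ J3 (w - Finsupp.single i 1) → False := by
    intro i hwi k1 k2 k3
    refine hmin (w - Finsupp.single i 1) tsub_le_self ?_ ?_
    · intro heq
      have := DFunLike.congr_fun heq i
      rw [Finsupp.tsub_apply, Finsupp.single_apply, if_pos rfl] at this
      omega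
    · exact Submodule.mem_inf.mpr ⟨Submodule.mem_inf.mpr
        ⟨mem_pow_of_deg J1 a1 _ k1, mem_pow_of_deg J2 a2 _ k2⟩,
        mem_pow_of_deg J3 a3 _ k3⟩
  by_cases hex : ∃ i ∈ J1 \ J2, 0 < w i
  · obtain ⟨i, hi, hwi⟩ := hex
    rw [Finset.mem_sdiff] at hi
    have e1 := degJ_tsub_of_mem J1 w hi.1 hwi
    have e2 := degJ_tsub_of_not_mem J2 w hi.2
    have e3 := degJ_tsub_of_not_mem J3 w (fun h => h13' i hi.1 h)
    exact key i hwi (by omega) (by omega) (by omega)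
  · push_neg at hex
    have hz : ∑ i ∈ J1 \ J2, w i = 0 :=
      Finset.sum_eq_zero (fun i hi => Nat.le_zero.mp (hex i hi))
    have hsub : (∑ i ∈ J1 ∩ J2, w i) ≤ degJ J2 w := by
      rw [degJ]
      exact Finset.sum_le_sum_of_subset (Finset.inter_subset_right)
    obtain ⟨i, hi, hwi⟩ : ∃ i ∈ J1 ∩ J2, 0 < w i := by
      by_contra hc
      push_neg at hc
      have : ∑ i ∈ J1 ∩ J2, w i = 0 :=
        Finset.sum_eq_zero (fun i hi => Nat.le_zero.mp (hc i hi))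
      omega
    rw [Finset.mem_inter] at hi
    have e1 := degJ_tsub_of_mem J1 w hi.1 hwi
    have e2 := degJ_tsub_of_mem J2 w hi.2 hwi
    have e3 := degJ_tsub_of_not_mem J3 w (fun h => h13' i hi.1 h)
    exact key i hwi (by omega) (by omega) (by omega)
end
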